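/- arXiv:1712.00357 — 6 statements merged into one kernel-verified Lean document; each statement's English description precedes it below -/
import Mathlib

section
/- Let C be a nonempty convex subset of a separable Hilbert space X with orthonormal basis (e_k), and let J = ∪_{x∈C} supp(x). If J is finite, then there exists x̄ ∈ C with supp(x̄) = J. -/
lemma root_subsingleton (a c : ℝ) (hac : a ≠ 0 ∨ c ≠ 0) :
    {t : ℝ | (1 - t) * a + t * c = 0}.Subsingleton := by
  intro t1 h1 t2 h2
  simp only [Set.mem_setOf_eq] at h1 h2
  have h3 : (t2 - t1) * (c - a) = 0 := by linear_combination h2 - h1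
  rcases mul_eq_zero.1 h3 with h | h
  · linarith [sub_eq_zero.1 h]
  · have hca : c = a := by linarith
    have ha : a = 0 := by linear_combination h1 - t1 * hca
    have hc : c = 0 := by rw [hca]; exact ha
    tauto

/-- Let `C` be a nonempty convex subset of a separable Hilbert space `X` with orthonormal
basis `(e_k)_{k∈ℕ}`, and let `J = ⋃_{x ∈ C} supp x`, where `supp x = {k : ⟨x, e_k⟩ ≠ 0}`.
If `J` is finite, then there exists `x̄ ∈ C` with `supp x̄ = J`. -/
theorem stmt_4 {X : Type*} [NormedAddCommGroup X] [InnerProductSpace ℝ X] [CompleteSpace X]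
    (b : HilbertBasis ℕ ℝ X) (C : Set X) (hne : C.Nonempty) (hconv : Convex ℝ C)
    (hJfin : Set.Finite {k : ℕ | ∃ x ∈ C, b.repr x k ≠ 0}) :
    ∃ xbar ∈ C, {k : ℕ | b.repr xbar k ≠ 0} = {k : ℕ | ∃ x ∈ C, b.repr x k ≠ 0} := by
  set J := {k : ℕ | ∃ x ∈ C, b.repr x k ≠ 0} with hJ
  have key : ∀ s : Finset ℕ, ↑s ⊆ J → ∃ z ∈ C, ∀ k ∈ s, b.repr z k ≠ 0 := by
    intro s
    induction s using Finset.induction with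
    | empty => exact fun _ => hne.elim fun z hz => ⟨z, hz, by simp⟩
    | @insert k s hk ih =>
      intro hsub
      obtain ⟨z, hzC, hz⟩ := ih (fun j hj => hsub (Finset.mem_insert_of_mem hj))
      have hkJ : k ∈ J := hsub (Finset.mem_insert_self k s)
      obtain ⟨x, hxC, hx⟩ := hkJ
      set bad : Set ℝ := ⋃ j ∈ insert k s, {t : ℝ | (1 - t) * b.repr z j + t * b.repr x j = 0}
      have hbadfin : bad.Finite := by
        apply Set.Finite.biUnion (Finset.finite_toSet _)
        intro j hj
        apply Set.Subsingleton.finite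
        apply root_subsingleton
        rcases Finset.mem_insert.1 hj with rfl | hj
        · exact Or.inr hx
        · exact Or.inl (hz j hj)
      obtain ⟨t, ht⟩ := ((Set.Ioo_infinite (zero_lt_one (α := ℝ))).diff hbadfin).nonempty
      obtain ⟨⟨ht0, ht1⟩, htbad⟩ := ht
      refine ⟨(1 - t) • z + t • x, hconv hzC hxC (by linarith) (le_of_lt ht0) (by ring), ?_⟩
      intro j hj
      have hrepr : b.repr ((1 - t) • z + t • x) j
          = (1 - t) * b.repr z j + t * b.repr x j := by
        simp [map_add, map_smul]; rfl
      rw [hrepr]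
      intro h0
      exact htbad (Set.mem_biUnion hj h0)
  obtain ⟨z, hzC, hz⟩ := key hJfin.toFinset (by simp)
  refine ⟨z, hzC, ?_⟩
  ext j
  constructor
  · exact fun h => ⟨z, hzC, h⟩
  · intro hjJ
    exact hz j (hJfin.mem_toFinset.2 hjJ)
end

section
/- Let (I_k)_{k∈ℕ} be a family of proper closed intervals of ℝ with [−ω, ω] ⊂ I_k for all k, for some ω > 0. Define B = { x ∈ ℓ²(ℕ) : x_k ∈ I_k for all k }. Then the interior of B in ℓ²(ℕ) equals { x ∈ ℓ²(ℕ) : x_k ∈ int I_k for all k }. -/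
/-- Let `(I_k)` be a family of proper closed intervals of `ℝ` with `[−ω, ω] ⊆ I_k` for all
`k`, where `ω > 0`.  Let `B = {x ∈ ℓ²(ℕ) : x_k ∈ I_k for all k}`.  Then the interior of `B`
in `ℓ²(ℕ)` equals `{x : x_k ∈ int I_k for all k}`. -/
theorem stmt_6 (ω : ℝ) (hω : 0 < ω) (I : ℕ → Set ℝ)
    (hcl : ∀ k, IsClosed (I k)) (hconn : ∀ k, (I k).OrdConnected)
    (hproper : ∀ k, I k ≠ Set.univ) (hsub : ∀ k, Set.Icc (-ω) ω ⊆ I k) :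
    interior {x : lp (fun _ : ℕ => ℝ) 2 | ∀ k, x k ∈ I k}
      = {x : lp (fun _ : ℕ => ℝ) 2 | ∀ k, x k ∈ interior (I k)} := by
  have hp2 : (0:ℝ) < (2 : ENNReal).toReal := by norm_num
  ext x
  constructor
  · intro hx k
    rw [mem_interior_iff_mem_nhds, Metric.mem_nhds_iff] at hx
    obtain ⟨ε, hε, hball⟩ := hx
    rw [mem_interior_iff_mem_nhds, Metric.mem_nhds_iff]
    refine ⟨ε, hε, fun z hz => ?_⟩
    have hnorm : ‖lp.single (E := fun _ : ℕ => ℝ) 2 k (z - x k)‖ = ‖z - x k‖ := by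
      exact lp.norm_single (E := fun _ : ℕ => ℝ) (p := 2) (by norm_num) k (z - x k)
    have hy : x + lp.single 2 k (z - x k) ∈ Metric.ball x ε := by
      rw [Metric.mem_ball, dist_eq_norm]
      simp only [add_sub_cancel_left]
      rw [hnorm]
      simpa [Real.dist_eq] using hz
    have := hball hy k
    simpa [lp.single_apply_self] using this
  · intro hx
    rw [mem_interior_iff_mem_nhds, Metric.mem_nhds_iff]
    -- coordinates tend to 0
    have hsum : Summable fun k => ‖x k‖ ^ (2 : ENNReal).toReal := (lp.memℓp x).summable hp2
    have htend : Filter.Tendsto (fun k => ‖x k‖ ^ (2 : ENNReal).toReal) Filter.atTop (nhds 0) :=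
      hsum.tendsto_atTop_zero
    have hev : ∀ᶠ k in Filter.atTop, ‖x k‖ < ω / 2 := by
      have : ∀ᶠ k in Filter.atTop, ‖x k‖ ^ (2 : ENNReal).toReal < (ω / 2) ^ (2 : ENNReal).toReal := by
        refine htend.eventually_lt_const ?_
        positivity
      filter_upwards [this] with k hk
      by_contra h
      push_neg at h
      exact absurd (Real.rpow_le_rpow (by positivity) h (le_of_lt hp2)) (not_le.2 hk)
    obtain ⟨N, hN⟩ := Filter.eventually_atTop.1 hev
    -- radii for each coordinate
    have hr : ∀ k, ∃ r > 0, Metric.ball (x k) r ⊆ I k := by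
      intro k
      obtain ⟨r, hr, hball⟩ := Metric.mem_nhds_iff.1
        (mem_interior_iff_mem_nhds.1 (hx k))
      exact ⟨r, hr, hball⟩
    choose r hrpos hrball using hr
    set ε : ℝ := (Finset.range (N + 1)).inf' ⟨0, by simp⟩ (fun k => min (r k) (ω / 2)) with hε
    have hεpos : 0 < ε := by
      apply Finset.lt_inf'_iff _ |>.2
      intro k _
      exact lt_min (hrpos k) (by positivity)
    refine ⟨ε, hεpos, fun y hy k => ?_⟩
    have hyk : ‖y k - x k‖ ≤ ‖y - x‖ := by
      simpa using lp.norm_apply_le_norm (E := fun _ : ℕ => ℝ) two_ne_zero (y - x) k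
    have hdist : ‖y k - x k‖ < ε := lt_of_le_of_lt hyk (by
      rw [Metric.mem_ball, dist_eq_norm] at hy; exact hy)
    rcases lt_or_ge k N with hk | hk
    · have hle : ε ≤ r k := le_trans
        (Finset.inf'_le _ (Finset.mem_range.2 (by omega))) (min_le_left _ _)
      exact hrball k (by
        rw [Metric.mem_ball, Real.dist_eq]
        calc |y k - x k| < ε := hdist
          _ ≤ r k := hle)
    · have hxk : ‖x k‖ < ω / 2 := hN k hk
      have hle : ε ≤ ω / 2 := le_trans
        (Finset.inf'_le _ (Finset.mem_range.2 (by omega : N < N + 1))) (min_le_right _ _)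
      apply hsub k
      have : ‖y k‖ < ω := by
        calc ‖y k‖ = ‖y k - x k + x k‖ := by ring_nf
          _ ≤ ‖y k - x k‖ + ‖x k‖ := norm_add_le _ _
          _ < ε + ω / 2 := by linarith
          _ ≤ ω / 2 + ω / 2 := by linarith
          _ = ω := by ring
      rw [Real.norm_eq_abs, abs_lt] at this
      exact ⟨le_of_lt this.1, le_of_lt this.2⟩
end

section
/- Let (g_k)_{k∈ℕ} be proper convex lsc functions on ℝ with g_k(0) = 0 = inf g_k, and g(x) = Σ_k g_k(x_k) on ℓ²(ℕ). Then for all x, x* ∈ ℓ²(ℕ): x* ∈ ∂g(x) if and only if x*_k ∈ ∂g_k(x_k) for every k. -/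
open scoped ENNReal NNReal RealInnerProductSpace

lemma ekey (a b : ℝ≥0∞) (r : ℝ) :
    ((a : EReal) + (r : EReal) ≤ (b : EReal)) ↔
      (b = ⊤ ∨ (a ≠ ⊤ ∧ a.toReal + r ≤ b.toReal)) := by
  rcases eq_or_ne b ⊤ with hb | hb
  · simp [hb, le_top]
  rcases eq_or_ne a ⊤ with ha | ha
  · subst ha
    simp only [EReal.coe_ennreal_top]
    constructor
    · intro h
      exfalso
      rw [EReal.top_add_of_ne_bot (by simp)] at h
      exact hb (EReal.coe_ennreal_eq_top_iff.mp (top_le_iff.mp h))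
    · rintro (h | ⟨h, _⟩) <;> simp_all
  · have hae : (a : EReal) = ((a.toReal : ℝ) : EReal) := by
      lift a to ℝ≥0 using ha; norm_cast
    have hbe : (b : EReal) = ((b.toReal : ℝ) : EReal) := by
      lift b to ℝ≥0 using hb; norm_cast
    rw [hae, hbe, ← EReal.coe_add, EReal.coe_le_coe_iff]
    tauto

lemma inner_hasSum (xs z : lp (fun _ : ℕ => ℝ) 2) :
    HasSum (fun k => xs k * z k) ⟪xs, z⟫ := by
  simpa [RCLike.inner_apply, mul_comm] using lp.hasSum_inner (𝕜 := ℝ) xs z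

/-- Let `(g_k)` be proper convex lsc functions `ℝ → [0,+∞]` with `g_k(0) = 0 = inf g_k`,
and `g(x) = Σ_k g_k(x_k)` on `ℓ²(ℕ)`.  Then for all `x, x* ∈ ℓ²(ℕ)`:
`x* ∈ ∂g(x)` if and only if `x*_k ∈ ∂g_k(x_k)` for every `k`. -/
theorem stmt_8 (g : ℕ → ℝ → ℝ≥0∞)
    (hconv : ∀ k, ∀ s t a b : ℝ, 0 ≤ a → 0 ≤ b → a + b = 1 →
      g k (a * s + b * t) ≤ ENNReal.ofReal a * g k s + ENNReal.ofReal b * g k t)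
    (hlsc : ∀ k, LowerSemicontinuous (g k))
    (h0 : ∀ k, g k 0 = 0)
    (x xs : lp (fun _ : ℕ => ℝ) 2) :
    (∀ y : lp (fun _ : ℕ => ℝ) 2,
        ((∑' k, g k (x k) : ℝ≥0∞) : EReal) + ((⟪xs, y - x⟫ : ℝ) : EReal)
          ≤ ((∑' k, g k (y k) : ℝ≥0∞) : EReal))
    ↔ (∀ k : ℕ, ∀ t : ℝ,
        ((g k (x k) : ℝ≥0∞) : EReal) + ((xs k * (t - x k) : ℝ) : EReal)
          ≤ ((g k t : ℝ≥0∞) : EReal)) := by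
  constructor
  · intro H k t
    -- Σ g(x) is finite, from H 0
    have hSx : (∑' j, g j (x j)) ≠ ⊤ := by
      have h := H 0
      rw [ekey] at h
      rcases h with h | ⟨h, _⟩
      · exact absurd h (by simp [lp.coeFn_zero, h0])
      · exact h
    set y : lp (fun _ : ℕ => ℝ) 2 := x + (t - x k) • lp.single 2 k 1 with hy
    have hyk : y k = t := by
      simp [hy, lp.coeFn_add, lp.coeFn_smul, lp.single_apply_self]
      change x k + (t - x k) * (lp.single 2 k (1:ℝ) : ℕ → ℝ) k = t
      simp [lp.single_apply_self]
    have hyj : ∀ j, j ≠ k → y j = x j := by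
      intro j hj
      simp [hy, lp.coeFn_add, lp.coeFn_smul, lp.single_apply_ne 2 k _ hj]
      change x j + (t - x k) * (lp.single 2 k (1:ℝ) : ℕ → ℝ) j = x j
      simp [lp.single_apply_ne 2 k _ hj, Pi.single_apply, hj]
    have hinner : (⟪xs, y - x⟫ : ℝ) = xs k * (t - x k) := by
      rw [hy, add_sub_cancel_left, real_inner_smul_right, lp.inner_single_right]
      simp [RCLike.inner_apply, mul_comm]
    set T : ℝ≥0∞ := ∑' j, if j = k then 0 else g j (x j) with hT
    have hx_split : (∑' j, g j (x j)) = g k (x k) + T := by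
      rw [hT, ENNReal.tsum_eq_add_tsum_ite (f := fun j => g j (x j)) k]
      congr 1
      exact tsum_congr fun j => by by_cases h : j = k <;> simp [h]
    have hy_split : (∑' j, g j (y j)) = g k t + T := by
      rw [ENNReal.tsum_eq_add_tsum_ite (f := fun j => g j (y j)) k, hyk, hT]
      congr 1
      refine tsum_congr fun j => ?_
      by_cases hj : j = k
      · simp [hj]
      · simp [hj, hyj j hj]
    have hT_ne : T ≠ ⊤ := by
      intro h
      exact hSx (by rw [hx_split, h, add_top])
    have hgxk : g k (x k) ≠ ⊤ := by
      intro h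
      exact hSx (by rw [hx_split, h, top_add])
    rcases eq_or_ne (g k t) ⊤ with ht | ht
    · rw [ekey]; left; exact ht
    have h := H y
    rw [ekey] at h
    rcases h with h | ⟨_, h⟩
    · exact absurd h (by rw [hy_split]; exact ENNReal.add_ne_top.mpr ⟨ht, hT_ne⟩)
    · rw [ekey]
      right
      refine ⟨hgxk, ?_⟩
      rw [hx_split, hy_split, hinner, ENNReal.toReal_add hgxk hT_ne,
        ENNReal.toReal_add ht hT_ne] at h
      linarith
  · intro hc y
    rw [ekey]
    by_cases hby : (∑' j, g j (y j)) = ⊤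
    · exact Or.inl hby
    right
    have hbk : ∀ j, g j (y j) ≠ ⊤ := fun j => ne_top_of_le_ne_top hby (ENNReal.le_tsum j)
    have key : ∀ j, g j (x j) ≠ ⊤ ∧
        (g j (x j)).toReal + xs j * (y j - x j) ≤ (g j (y j)).toReal := by
      intro j
      have h := hc j (y j)
      rw [ekey] at h
      rcases h with h | h
      · exact absurd h (hbk j)
      · exact h
    have hcs : HasSum (fun j => xs j * ((y : ℕ → ℝ) j - x j)) ⟪xs, y - x⟫ := by
      simpa [lp.coeFn_sub, Pi.sub_apply] using inner_hasSum xs (y - x)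
    have habs : Summable fun j => |xs j * ((y : ℕ → ℝ) j - x j)| := hcs.summable.abs
    have hbound : ∀ j, g j (x j) ≤ g j (y j) + ENNReal.ofReal |xs j * ((y : ℕ → ℝ) j - x j)| := by
      intro j
      calc g j (x j) = ENNReal.ofReal ((g j (x j)).toReal) :=
            (ENNReal.ofReal_toReal (key j).1).symm
        _ ≤ ENNReal.ofReal ((g j (y j)).toReal + |xs j * ((y : ℕ → ℝ) j - x j)|) := by
            refine ENNReal.ofReal_le_ofReal ?_
            have := (key j).2
            have := neg_abs_le (xs j * ((y : ℕ → ℝ) j - x j))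
            linarith
        _ = g j (y j) + ENNReal.ofReal |xs j * ((y : ℕ → ℝ) j - x j)| := by
            rw [ENNReal.ofReal_add ENNReal.toReal_nonneg (abs_nonneg _),
              ENNReal.ofReal_toReal (hbk j)]
    have hax : (∑' j, g j (x j)) ≠ ⊤ := by
      refine ne_top_of_le_ne_top ?_ (ENNReal.tsum_le_tsum hbound)
      rw [ENNReal.tsum_add]
      refine ENNReal.add_ne_top.mpr ⟨hby, ?_⟩
      rw [← ENNReal.ofReal_tsum_of_nonneg (fun _ => abs_nonneg _) habs]
      exact ENNReal.ofReal_ne_top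
    refine ⟨hax, ?_⟩
    rw [ENNReal.tsum_toReal_eq (fun j => (key j).1), ENNReal.tsum_toReal_eq hbk]
    have hsa : Summable fun j => (g j (x j)).toReal := ENNReal.summable_toReal hax
    have hsb : Summable fun j => (g j (y j)).toReal := ENNReal.summable_toReal hby
    have hle : (∑' j, ((g j (x j)).toReal + xs j * ((y : ℕ → ℝ) j - x j)))
        ≤ ∑' j, (g j (y j)).toReal :=
      Summable.tsum_le_tsum (fun j => (key j).2) (hsa.add hcs.summable) hsb
    rw [Summable.tsum_add hsa hcs.summable, hcs.tsum_eq] at hle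
    exact hle
end

section
/- Let (I_k)_{k∈ℕ} be proper closed intervals of ℝ with [−ω, ω] ⊂ I_k for all k, for some ω > 0, and let g(x) = Σ_k σ_{I_k}(x_k) on ℓ²(ℕ). Then g is the support function of the set B = { u ∈ ℓ²(ℕ) : u_k ∈ I_k for all k }; equivalently, the Fenchel conjugate g* is the indicator function of B. -/
open scoped RealInnerProductSpace


noncomputable section Aux11

/-- support function of a set of reals, as `EReal`. -/
def sig11 (A : Set ℝ) (t : ℝ) : EReal := ⨆ s ∈ A, ((s * t : ℝ) : EReal)

lemma sig11_le {A : Set ℝ} {t c : ℝ} (h : ∀ a ∈ A, a * t ≤ c) :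
    sig11 A t ≤ (c : EReal) :=
  iSup₂_le fun a ha => EReal.coe_le_coe_iff.2 (h a ha)

lemma le_sig11 {A : Set ℝ} {t a : ℝ} (ha : a ∈ A) :
    ((a * t : ℝ) : EReal) ≤ sig11 A t :=
  le_iSup₂ (f := fun s (_ : s ∈ A) => ((s * t : ℝ) : EReal)) a ha

lemma sig11_zero {A : Set ℝ} {a : ℝ} (ha : a ∈ A) : sig11 A 0 = 0 := by
  refine le_antisymm (iSup₂_le fun s _ => by simp) ?_
  simpa using le_sig11 (t := 0) ha

lemma sig11_nonneg {A : Set ℝ} {ω : ℝ} (hω : 0 < ω) (h1 : ω ∈ A) (h2 : -ω ∈ A)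
    (t : ℝ) : (0 : EReal) ≤ sig11 A t := by
  rcases le_or_gt 0 t with ht | ht
  · refine le_trans ?_ (le_sig11 (t := t) h1)
    exact_mod_cast mul_nonneg hω.le ht
  · refine le_trans ?_ (le_sig11 (t := t) h2)
    have : (0:ℝ) ≤ -ω * t := by nlinarith
    exact_mod_cast this

lemma ereal_iSup_eq_top {α : Sort*} (f : α → EReal)
    (h : ∀ M : ℝ, ∃ a, (M : EReal) < f a) : (⨆ a, f a) = ⊤ := by
  rw [iSup_eq_top]
  intro b hb
  induction b with
  | bot => obtain ⟨a, ha⟩ := h 0; exact ⟨a, lt_of_le_of_lt bot_le ha⟩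
  | coe b => exact h b
  | top => exact absurd hb (lt_irrefl _)

lemma sig11_attain {A : Set ℝ} (hcl : IsClosed A) (h0 : (0:ℝ) ∈ A) {t : ℝ}
    (hne : sig11 A t ≠ ⊤) : ∃ c ∈ A, sig11 A t = ((c * t : ℝ) : EReal) := by
  rcases lt_trichotomy t 0 with ht | ht | ht
  · -- t < 0 : use sInf
    have hbdd : BddBelow A := by
      by_contra hb
      apply hne
      refine ereal_iSup_eq_top _ fun M => ?_
      obtain ⟨a, ha, hab⟩ := not_bddBelow_iff.1 hb (M / t)
      refine ⟨a, ?_⟩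
      have h1 : M < a * t := by nlinarith [(div_mul_cancel₀ M (ne_of_lt ht))]
      have : (M : EReal) < ((a * t : ℝ) : EReal) := by exact_mod_cast h1
      refine this.trans_le ?_
      simpa [iSup_pos ha] using
        le_iSup (fun (_ : a ∈ A) => ((a * t : ℝ) : EReal)) ha
    have hmem : sInf A ∈ A := hcl.csInf_mem ⟨0, h0⟩ hbdd
    refine ⟨sInf A, hmem, le_antisymm ?_ (le_sig11 hmem)⟩
    exact sig11_le fun a ha =>
      mul_le_mul_of_nonpos_right (csInf_le hbdd ha) ht.le
  · exact ⟨0, h0, by rw [ht, sig11_zero h0]; simp⟩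
  · -- t > 0 : use sSup
    have hbdd : BddAbove A := by
      by_contra hb
      apply hne
      refine ereal_iSup_eq_top _ fun M => ?_
      obtain ⟨a, ha, hab⟩ := not_bddAbove_iff.1 hb (M / t)
      refine ⟨a, ?_⟩
      have h1 : M < a * t := by nlinarith [(div_mul_cancel₀ M (ne_of_gt ht))]
      have : (M : EReal) < ((a * t : ℝ) : EReal) := by exact_mod_cast h1
      refine this.trans_le ?_
      simpa [iSup_pos ha] using
        le_iSup (fun (_ : a ∈ A) => ((a * t : ℝ) : EReal)) ha
    have hmem : sSup A ∈ A := hcl.csSup_mem ⟨0, h0⟩ hbdd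
    refine ⟨sSup A, hmem, le_antisymm ?_ (le_sig11 hmem)⟩
    exact sig11_le fun a ha =>
      mul_le_mul_of_nonneg_right (le_csSup hbdd ha) ht.le

lemma ereal_coe_sum (s : Finset ℕ) (f : ℕ → ℝ) :
    ((∑ k ∈ s, f k : ℝ) : EReal) = ∑ k ∈ s, ((f k : ℝ) : EReal) :=
  map_sum (⟨⟨(fun x : ℝ => (x : EReal)), EReal.coe_zero⟩, EReal.coe_add⟩ : ℝ →+ EReal) f s

lemma ereal_tsum_eq_iSup (f : ℕ → EReal) (hf : ∀ k, 0 ≤ f k) :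
    ∑' k, f k = ⨆ s : Finset ℕ, ∑ k ∈ s, f k := by
  have hmono : Monotone (fun s : Finset ℕ => ∑ k ∈ s, f k) := fun s t hst =>
    Finset.sum_le_sum_of_subset_of_nonneg hst fun i _ _ => hf i
  have h : HasSum f (⨆ s : Finset ℕ, ∑ k ∈ s, f k) := tendsto_atTop_iSup hmono
  exact h.tsum_eq


section Main

variable (ω : ℝ) (I : ℕ → Set ℝ)

lemma part1_11 (hω : 0 < ω) (hcl : ∀ k, IsClosed (I k))
    (hsub : ∀ k, Set.Icc (-ω) ω ⊆ I k) (x : lp (fun _ : ℕ => ℝ) 2) :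
    (∑' k, sig11 (I k) (x k))
      = ⨆ u ∈ {u : lp (fun _ : ℕ => ℝ) 2 | ∀ k, u k ∈ I k}, ((⟪u, x⟫ : ℝ) : EReal) := by
  classical
  have h0k : ∀ k, (0:ℝ) ∈ I k := fun k => hsub k ⟨by linarith, hω.le⟩
  have hωk : ∀ k, ω ∈ I k := fun k => hsub k ⟨by linarith, le_refl _⟩
  have hmωk : ∀ k, -ω ∈ I k := fun k => hsub k ⟨le_refl _, by linarith⟩
  have hnn : ∀ k, (0:EReal) ≤ sig11 (I k) (x k) := fun k =>
    sig11_nonneg hω (hωk k) (hmωk k) _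
  rw [ereal_tsum_eq_iSup _ hnn]
  apply le_antisymm
  · apply iSup_le; intro s
    by_cases htop : ∀ k ∈ s, sig11 (I k) (x k) ≠ ⊤
    · choose c hc1 hc2 using fun k (hk : k ∈ s) =>
        sig11_attain (hcl k) (h0k k) (htop k hk)
      set c' : ℕ → ℝ := fun k => if h : k ∈ s then c k h else 0 with hc'
      have hc'' : ∀ k (hk : k ∈ s), c' k = c k hk := fun k hk => dif_pos hk
      set u : lp (fun _ : ℕ => ℝ) 2 := ∑ k ∈ s, lp.single 2 k (c' k) with hudef
      have hu : ∀ j, u j = if j ∈ s then c' j else 0 := by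
        intro j
        rw [hudef]
        simp only [lp.coeFn_sum, Finset.sum_apply, lp.single_apply]
        by_cases hj : j ∈ s
        · rw [if_pos hj, Finset.sum_eq_single j]
          · simp
          · intro b _ hbj; rw [Pi.single_apply, if_neg (Ne.symm hbj)]
          · intro hj'; exact (hj' hj).elim
        · rw [if_neg hj, Finset.sum_eq_zero]
          intro b hb
          rw [Pi.single_apply, if_neg]
          rintro rfl; exact hj hb
      have huB : u ∈ {u : lp (fun _ : ℕ => ℝ) 2 | ∀ k, u k ∈ I k} := by
        intro j
        rw [hu j]
        by_cases hj : j ∈ s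
        · rw [if_pos hj, hc'' j hj]; exact hc1 j hj
        · rw [if_neg hj]; exact h0k j
      have hinner : ⟪u, x⟫ = ∑ k ∈ s, c' k * x k := by
        rw [hudef, sum_inner]
        refine Finset.sum_congr rfl fun k _ => ?_
        rw [lp.inner_single_left]
        simp [RCLike.inner_apply]; ring
      calc ∑ k ∈ s, sig11 (I k) (x k)
          = ∑ k ∈ s, ((c' k * x k : ℝ) : EReal) := by
            refine Finset.sum_congr rfl fun k hk => ?_
            rw [hc2 k hk, hc'' k hk]
        _ = ((∑ k ∈ s, c' k * x k : ℝ) : EReal) := (ereal_coe_sum s _).symm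
        _ = ((⟪u, x⟫ : ℝ) : EReal) := by rw [hinner]
        _ ≤ _ := le_iSup₂ (f := fun v (_ : v ∈ {u : lp (fun _ : ℕ => ℝ) 2 | ∀ k, u k ∈ I k})
              => ((⟪v, x⟫ : ℝ) : EReal)) u huB
    · push_neg at htop
      obtain ⟨k, _, htopk⟩ := htop
      have hRHS : (⨆ u ∈ {u : lp (fun _ : ℕ => ℝ) 2 | ∀ k, u k ∈ I k},
          ((⟪u, x⟫ : ℝ) : EReal)) = ⊤ := by
        refine ereal_iSup_eq_top _ fun M => ?_
        obtain ⟨t, ht⟩ := iSup_eq_top.1 htopk (M : EReal) (EReal.coe_lt_top M)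
        have htI : t ∈ I k := by
          by_contra htI
          rw [iSup_neg htI] at ht
          exact absurd ht (by simp)
        rw [iSup_pos htI] at ht
        set v : lp (fun _ : ℕ => ℝ) 2 := lp.single 2 k t with hvdef
        have hvB : v ∈ {u : lp (fun _ : ℕ => ℝ) 2 | ∀ k, u k ∈ I k} := by
          intro j
          by_cases hj : j = k
          · subst hj; rw [hvdef, lp.single_apply_self]; exact htI
          · rw [hvdef]; simpa [lp.single_apply, hj] using h0k j
        have hvx : ⟪v, x⟫ = t * x k := by
          rw [hvdef, lp.inner_single_left]; simp [RCLike.inner_apply, mul_comm]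
        refine ⟨v, ?_⟩
        rw [iSup_pos hvB, hvx]
        exact ht
      rw [hRHS]; exact le_top
  · apply iSup₂_le; intro u hu
    have hsml : Summable (fun k => u k * x k) := by
      simpa [RCLike.inner_apply, mul_comm] using lp.summable_inner (𝕜 := ℝ) u x
    have hinner : ⟪u, x⟫ = ∑' k, u k * x k := by
      simpa [RCLike.inner_apply, mul_comm] using lp.inner_eq_tsum (𝕜 := ℝ) u x
    have htend : Filter.Tendsto (fun s : Finset ℕ => ((∑ k ∈ s, u k * x k : ℝ) : EReal))
        Filter.atTop (nhds ((⟪u, x⟫ : ℝ) : EReal)) := by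
      rw [hinner]
      exact EReal.tendsto_coe.2 hsml.hasSum
    refine le_of_tendsto htend (Filter.Eventually.of_forall fun s => ?_)
    calc ((∑ k ∈ s, u k * x k : ℝ) : EReal)
        = ∑ k ∈ s, ((u k * x k : ℝ) : EReal) := ereal_coe_sum s _
      _ ≤ ∑ k ∈ s, sig11 (I k) (x k) := Finset.sum_le_sum fun k _ => le_sig11 (hu k)
      _ ≤ _ := le_iSup (fun s : Finset ℕ => ∑ k ∈ s, sig11 (I k) (x k)) s


lemma gap11 (hω : 0 < ω) (hsub : ∀ k, Set.Icc (-ω) ω ⊆ I k)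
    (u : lp (fun _ : ℕ => ℝ) 2) (k : ℕ) (d δ : ℝ) (hδ : 0 < δ)
    (hd : ∀ n : ℝ, 0 < n → sig11 (I k) (d * n) ≤ ((u k * (d * n) - δ * n : ℝ) : EReal)) :
    (⨆ x : lp (fun _ : ℕ => ℝ) 2,
        (((⟪u, x⟫ : ℝ) : EReal) - ∑' j, sig11 (I j) (x j))) = ⊤ := by
  classical
  have h0k : ∀ j, (0:ℝ) ∈ I j := fun j => hsub j ⟨by linarith, hω.le⟩
  refine ereal_iSup_eq_top _ fun M => ?_
  set n : ℝ := max 1 ((M + 1) / δ) with hn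
  have hn0 : 0 < n := lt_of_lt_of_le one_pos (le_max_left _ _)
  have hMn : M + 1 ≤ δ * n := by
    have h := le_max_right 1 ((M + 1) / δ)
    calc M + 1 = ((M + 1) / δ) * δ := (div_mul_cancel₀ _ hδ.ne').symm
      _ ≤ n * δ := mul_le_mul_of_nonneg_right h hδ.le
      _ = δ * n := mul_comm _ _
  refine ⟨lp.single 2 k (d * n), ?_⟩
  have hinner : ⟪u, (lp.single 2 k (d * n) : lp (fun _ : ℕ => ℝ) 2)⟫ = u k * (d * n) := by
    rw [real_inner_comm, lp.inner_single_left]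
    simp [RCLike.inner_apply, mul_comm]
  have hs : (∑' j, sig11 (I j) ((lp.single 2 k (d * n) : lp (fun _ : ℕ => ℝ) 2) j))
      = sig11 (I k) (d * n) := by
    rw [tsum_eq_single k]
    · rw [lp.single_apply_self]
    · intro j hj
      have hz : (lp.single 2 k (d * n) : lp (fun _ : ℕ => ℝ) 2) j = 0 := by
        simp [lp.single_apply, hj]
      rw [hz]; exact sig11_zero (h0k j)
  rw [hinner, hs]
  calc (M : EReal) < ((M + 1 : ℝ) : EReal) := by exact_mod_cast lt_add_one M
    _ ≤ ((δ * n : ℝ) : EReal) := by exact_mod_cast hMn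
    _ = ((u k * (d * n) : ℝ) : EReal) - ((u k * (d * n) - δ * n : ℝ) : EReal) := by
        rw [← EReal.coe_sub]; norm_cast; ring
    _ ≤ _ := EReal.sub_le_sub (le_refl _) (hd n hn0)

open Classical in
lemma part2_11 (hω : 0 < ω) (hcl : ∀ k, IsClosed (I k)) (hconn : ∀ k, (I k).OrdConnected)
    (hsub : ∀ k, Set.Icc (-ω) ω ⊆ I k) (u : lp (fun _ : ℕ => ℝ) 2) :
    (⨆ x : lp (fun _ : ℕ => ℝ) 2,
        (((⟪u, x⟫ : ℝ) : EReal) - ∑' k, sig11 (I k) (x k)))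
      = if ∀ k, u k ∈ I k then (0 : EReal) else ⊤ := by
  have h0k : ∀ j, (0:ℝ) ∈ I j := fun j => hsub j ⟨by linarith, hω.le⟩
  by_cases h : ∀ k, u k ∈ I k
  · rw [if_pos h]
    apply le_antisymm
    · apply iSup_le; intro x
      have h1 : ((⟪u, x⟫ : ℝ) : EReal) ≤ ∑' k, sig11 (I k) (x k) := by
        rw [part1_11 ω I hω hcl hsub x]
        exact le_iSup₂ (f := fun v (_ : v ∈ {u : lp (fun _ : ℕ => ℝ) 2 | ∀ k, u k ∈ I k})
          => ((⟪v, x⟫ : ℝ) : EReal)) u h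
      calc ((⟪u, x⟫ : ℝ) : EReal) - ∑' k, sig11 (I k) (x k)
          ≤ ((⟪u, x⟫ : ℝ) : EReal) - ((⟪u, x⟫ : ℝ) : EReal) :=
            EReal.sub_le_sub (le_refl _) h1
        _ = 0 := by rw [← EReal.coe_sub]; norm_cast; ring
    · refine le_trans ?_ (le_iSup _ (0 : lp (fun _ : ℕ => ℝ) 2))
      have hS0 : (∑' k, sig11 (I k) ((0 : lp (fun _ : ℕ => ℝ) 2) k)) = 0 := by
        have hz : ∀ k, sig11 (I k) ((0 : lp (fun _ : ℕ => ℝ) 2) k) = 0 := by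
          intro k
          have h0 : ((0 : lp (fun _ : ℕ => ℝ) 2) : ∀ _ : ℕ, ℝ) k = 0 := by simp
          rw [h0]; exact sig11_zero (h0k k)
        rw [tsum_congr hz, tsum_zero]
      rw [hS0, inner_zero_right]
      simp
  · rw [if_neg h]
    push_neg at h; obtain ⟨k, hk⟩ := h
    have hdir : (∀ a ∈ I k, a < u k) ∨ (∀ a ∈ I k, u k < a) := by
      by_contra hcon
      push_neg at hcon
      obtain ⟨⟨a, ha, hau⟩, ⟨b, hb, hbu⟩⟩ := hcon
      exact hk ((hconn k).out hb ha ⟨hbu, hau⟩)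
    rcases hdir with h1 | h1
    · have hbdd : BddAbove (I k) := ⟨u k, fun a ha => (h1 a ha).le⟩
      have hbm : sSup (I k) ∈ I k := (hcl k).csSup_mem ⟨0, h0k k⟩ hbdd
      have hlt : sSup (I k) < u k := h1 _ hbm
      refine gap11 ω I hω hsub u k 1 (u k - sSup (I k)) (by linarith) fun n hn => ?_
      have hle : sig11 (I k) (1 * n) ≤ ((sSup (I k) * n : ℝ) : EReal) := by
        rw [one_mul]
        exact sig11_le fun a ha => mul_le_mul_of_nonneg_right (le_csSup hbdd ha) hn.le
      refine hle.trans (EReal.coe_le_coe_iff.2 (le_of_eq (by ring)))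
    · have hbdd : BddBelow (I k) := ⟨u k, fun a ha => (h1 a ha).le⟩
      have hbm : sInf (I k) ∈ I k := (hcl k).csInf_mem ⟨0, h0k k⟩ hbdd
      have hlt : u k < sInf (I k) := h1 _ hbm
      refine gap11 ω I hω hsub u k (-1) (sInf (I k) - u k) (by linarith) fun n hn => ?_
      have hle : sig11 (I k) (-1 * n) ≤ ((sInf (I k) * (-1 * n) : ℝ) : EReal) := by
        exact sig11_le fun a ha =>
          mul_le_mul_of_nonpos_right (csInf_le hbdd ha) (by linarith)
      refine hle.trans (EReal.coe_le_coe_iff.2 (le_of_eq (by ring)))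

end Main
end Aux11

open Classical in
/-- Let `(I_k)` be proper closed intervals of `ℝ` with `[−ω, ω] ⊆ I_k` for all `k`, `ω > 0`,
and `g(x) = Σ_k σ_{I_k}(x_k)` on `ℓ²(ℕ)`.  Then `g` is the support function of
`B = {u ∈ ℓ²(ℕ) : u_k ∈ I_k ∀k}`, and equivalently the Fenchel conjugate `g*` is the
indicator function of `B`. -/
theorem stmt_11 (ω : ℝ) (hω : 0 < ω) (I : ℕ → Set ℝ)
    (hcl : ∀ k, IsClosed (I k)) (hconn : ∀ k, (I k).OrdConnected)
    (hproper : ∀ k, I k ≠ Set.univ) (hsub : ∀ k, Set.Icc (-ω) ω ⊆ I k) :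
    (∀ x : lp (fun _ : ℕ => ℝ) 2,
        (∑' k, ⨆ s ∈ I k, ((s * x k : ℝ) : EReal))
          = ⨆ u ∈ {u : lp (fun _ : ℕ => ℝ) 2 | ∀ k, u k ∈ I k}, ((⟪u, x⟫ : ℝ) : EReal))
    ∧ (∀ u : lp (fun _ : ℕ => ℝ) 2,
        (⨆ x : lp (fun _ : ℕ => ℝ) 2,
            (((⟪u, x⟫ : ℝ) : EReal) - ∑' k, ⨆ s ∈ I k, ((s * x k : ℝ) : EReal)))
          = if ∀ k, u k ∈ I k then (0 : EReal) else ⊤) := by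
  exact ⟨fun x => part1_11 ω I hω hcl hsub x, fun u => part2_11 ω I hω hcl hconn hsub u⟩
end

section
/- Under hypothesis (H) (f = g + h with h convex, differentiable, bounded below with L-Lipschitz gradient, and g(x) = Σ_k [ψ_k(x_k) + σ_{I_k}(x_k)] with each I_k a proper closed interval containing [−ω,ω], ψ_k convex lsc, ψ_k(0)=0, ψ_k'(0)=0): for every x ∈ dom ∂f, the support supp(x) = {k : x_k ≠ 0} is finite, with cardinality bounded by ω⁻² ‖x + x*‖² for any x* ∈ ∂g(x). -/
open scoped RealInnerProductSpace ENNReal Topology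

private lemma ereal_tsum_coe (a : ℕ → ℝ≥0∞) :
    (∑' k, ((a k : EReal))) = ((∑' k, a k : ℝ≥0∞) : EReal) := by
  have h1 : HasSum a (∑' k, a k) := ENNReal.summable.hasSum
  have h2 : HasSum (fun k => ((a k : EReal))) ((∑' k, a k : ℝ≥0∞) : EReal) :=
    h1.map (⟨⟨(↑), EReal.coe_ennreal_zero⟩, EReal.coe_ennreal_add⟩ : ℝ≥0∞ →+ EReal)
      continuous_coe_ennreal_ereal
  exact h2.tsum_eq

private lemma ereal_nonneg_rep (e : EReal) (he : 0 ≤ e) : ∃ a : ℝ≥0∞, e = (a : EReal) := by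
  induction e with
  | bot => exact absurd he (by simp)
  | coe r =>
    refine ⟨r.toNNReal, ?_⟩
    rw [EReal.coe_nnreal_eq_coe_real]
    exact_mod_cast (Real.coe_toNNReal r (by exact_mod_cast he)).symm
  | top => exact ⟨⊤, by simp⟩

private lemma ereal_coe_ennreal_fin (z : ℝ≥0∞) (h : z ≠ ⊤) :
    (z : EReal) = ((z.toReal : ℝ) : EReal) := by
  induction z with
  | top => simp at h
  | coe r => rw [EReal.coe_nnreal_eq_coe_real]; simp

private lemma psi_nonneg (ψ : ℝ → EReal)
    (hconv : ∀ s t a b : ℝ, 0 ≤ a → 0 ≤ b → a + b = 1 →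
      ψ (a * s + b * t) ≤ (a : EReal) * ψ s + (b : EReal) * ψ t)
    (hbot : ∀ t, ψ t ≠ ⊥) (h0 : ψ 0 = 0)
    (F : ℝ → ℝ) (ε : ℝ) (hε : 0 < ε) (hF : ∀ t : ℝ, |t| < ε → ψ t = (F t : EReal))
    (hd : HasDerivAt F 0 0) : ∀ t, 0 ≤ ψ t := by
  intro t
  rcases eq_or_ne t 0 with rfl | ht
  · rw [h0]
  rcases eq_or_ne (ψ t) ⊤ with htop | htop
  · rw [htop]; exact le_top
  obtain ⟨r, hr⟩ : ∃ r : ℝ, ψ t = (r : ℝ) := by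
    have h1 := hbot t
    cases hc : ψ t with
    | bot => exact absurd hc h1
    | coe r => exact ⟨r, rfl⟩
    | top => exact absurd hc htop
  rw [hr]
  by_contra hneg
  push_neg at hneg
  have hneg2 : r < 0 := by exact_mod_cast hneg
  have hkey : ∀ a : ℝ, 0 < a → a ≤ 1 → |a * t| < ε → F (a * t) / a ≤ r := by
    intro a ha ha1 haε
    have hc := hconv t 0 a (1 - a) ha.le (by linarith) (by ring)
    rw [h0, mul_zero, hr, add_zero, mul_zero, add_zero, ← EReal.coe_mul] at hc
    rw [hF _ haε] at hc
    rw [EReal.coe_le_coe_iff] at hc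
    rw [div_le_iff₀ ha]
    linarith [hc]
  have hF0 : F 0 = 0 := by
    have := hF 0 (by simpa using hε)
    rw [h0] at this
    exact_mod_cast this.symm
  have hslope : Filter.Tendsto (fun s => F s / s) (𝓝[≠] (0:ℝ)) (𝓝 0) := by
    have h1 := hasDerivAt_iff_tendsto_slope.mp hd
    apply h1.congr
    intro s
    rw [slope_def_field, hF0]
    simp [div_eq_mul_inv]
  have hmap : Filter.Tendsto (fun a : ℝ => a * t) (𝓝[>] (0:ℝ)) (𝓝[≠] (0:ℝ)) := by
    rw [tendsto_nhdsWithin_iff]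
    constructor
    · have h2 : Filter.Tendsto (fun a : ℝ => a * t) (𝓝 0) (𝓝 (0 * t)) :=
        (continuous_mul_right t).continuousAt
      rw [zero_mul] at h2
      exact h2.mono_left nhdsWithin_le_nhds
    · filter_upwards [self_mem_nhdsWithin] with a (ha : 0 < a)
      simp [mul_ne_zero ha.ne' ht]
  have hlim : Filter.Tendsto (fun a : ℝ => F (a * t) / a) (𝓝[>] (0:ℝ)) (𝓝 0) := by
    have h1 : Filter.Tendsto (fun a : ℝ => t * (F (a * t) / (a * t))) (𝓝[>] (0:ℝ)) (𝓝 (t * 0)) :=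
      ((hslope.comp hmap).const_mul t)
    rw [mul_zero] at h1
    apply h1.congr'
    filter_upwards [self_mem_nhdsWithin] with a (ha : 0 < a)
    field_simp
  have hev : ∀ᶠ a in 𝓝[>] (0:ℝ), F (a * t) / a ≤ r := by
    have hδ : 0 < min 1 (ε / (|t| + 1)) := by
      apply lt_min one_pos
      positivity
    filter_upwards [Ioo_mem_nhdsGT_of_mem ⟨le_refl 0, hδ⟩] with a ⟨ha0, ha1⟩
    refine hkey a ha0 (ha1.le.trans (min_le_left _ _)) ?_
    have h2 : a < ε / (|t| + 1) := lt_of_lt_of_le ha1 (min_le_right _ _)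
    have h3 : |a * t| = a * |t| := by rw [abs_mul, abs_of_pos ha0]
    rw [h3]
    calc a * |t| ≤ a * (|t| + 1) := by nlinarith [abs_nonneg t]
    _ < ε / (|t| + 1) * (|t| + 1) := by
        apply mul_lt_mul_of_pos_right h2
        positivity
    _ = ε := by field_simp
  have := le_of_tendsto hlim hev
  linarith

/-- Hypothesis (H): `f = g + h` on `X = ℓ²(ℕ)`, with `h` convex, bounded below,
differentiable with `L`-Lipschitz gradient `h'`, and
`g(x) = Σ_k [ψ_k(x_k) + σ_{I_k}(x_k)]`, each `I_k` a proper closed interval containing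
`[−ω, ω]` (`ω > 0`), each `ψ_k` proper convex lsc with `ψ_k(0) = 0` and `ψ_k'(0) = 0`
(encoded: `ψ_k` agrees near `0` with a real function having derivative `0` at `0`).
Then every `x ∈ dom ∂f` has finite support, with cardinality at most `ω⁻² ‖x + x*‖²`
for any `x* ∈ ∂g(x)`. -/
theorem stmt_13 (ω L : ℝ) (hω : 0 < ω) (hL : 0 < L)
    (I : ℕ → Set ℝ) (hIcl : ∀ k, IsClosed (I k)) (hIconn : ∀ k, (I k).OrdConnected)
    (hIproper : ∀ k, I k ≠ Set.univ) (hIsub : ∀ k, Set.Icc (-ω) ω ⊆ I k)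
    (ψ : ℕ → ℝ → EReal)
    (hψconv : ∀ k, ∀ s t a b : ℝ, 0 ≤ a → 0 ≤ b → a + b = 1 →
      ψ k (a * s + b * t) ≤ (a : EReal) * ψ k s + (b : EReal) * ψ k t)
    (hψlsc : ∀ k, LowerSemicontinuous (ψ k))
    (hψbot : ∀ k t, ψ k t ≠ ⊥)
    (hψ0 : ∀ k, ψ k 0 = 0)
    (hψdiff : ∀ k, ∃ (F : ℝ → ℝ) (ε : ℝ), 0 < ε ∧
      (∀ t : ℝ, |t| < ε → ψ k t = (F t : EReal)) ∧ HasDerivAt F 0 0)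
    (h : lp (fun _ : ℕ => ℝ) 2 → ℝ) (h' : lp (fun _ : ℕ => ℝ) 2 → lp (fun _ : ℕ => ℝ) 2)
    (hhconv : ConvexOn ℝ Set.univ h) (hhbdd : BddBelow (Set.range h))
    (hhgrad : ∀ x, HasGradientAt h (h' x) x)
    (hhlip : LipschitzWith (Real.toNNReal L) h')
    (g f : lp (fun _ : ℕ => ℝ) 2 → EReal)
    (hg : ∀ x, g x = ∑' k, (ψ k (x k) + ⨆ s ∈ I k, ((s * x k : ℝ) : EReal)))
    (hf : ∀ x, f x = g x + ((h x : ℝ) : EReal))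
    (x : lp (fun _ : ℕ => ℝ) 2)
    (hxdom : ∃ u : lp (fun _ : ℕ => ℝ) 2, ∀ y,
      f x + ((⟪u, y - x⟫ : ℝ) : EReal) ≤ f y)
    (xs : lp (fun _ : ℕ => ℝ) 2)
    (hxs : ∀ y, g x + ((⟪xs, y - x⟫ : ℝ) : EReal) ≤ g y) :
    {k : ℕ | x k ≠ 0}.Finite
      ∧ ({k : ℕ | x k ≠ 0}.ncard : ℝ) ≤ ω⁻¹ ^ 2 * ‖x + xs‖ ^ 2 := by
  classical
  -- basic facts about the summands
  have h0I : ∀ k, (0:ℝ) ∈ I k := fun k => hIsub k ⟨by linarith, by linarith⟩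
  have hσ0 : ∀ k t, (0:EReal) ≤ ⨆ s ∈ I k, ((s * t : ℝ) : EReal) := by
    intro k t
    have := le_iSup₂ (f := fun (s : ℝ) (_ : s ∈ I k) => ((s * t : ℝ) : EReal)) 0 (h0I k)
    simpa using this
  have hψpos : ∀ k t, 0 ≤ ψ k t := by
    intro k
    obtain ⟨F, ε, hε, hFa, hFd⟩ := hψdiff k
    exact psi_nonneg (ψ k) (hψconv k) (hψbot k) (hψ0 k) F ε hε hFa hFd
  have hφpos : ∀ k t, (0:EReal) ≤ ψ k t + ⨆ s ∈ I k, ((s * t : ℝ) : EReal) := by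
    intro k t
    have := add_le_add (hψpos k t) (hσ0 k t)
    simpa using this
  have hφ0 : ∀ k, ψ k (0:ℝ) + (⨆ s ∈ I k, ((s * (0:ℝ) : ℝ) : EReal)) = 0 := by
    intro k
    rw [hψ0 k, zero_add]
    apply le_antisymm
    · apply iSup₂_le
      intro s hs
      simp
    · exact hσ0 k 0
  -- ENNReal representation of the terms at x
  have hrep : ∀ j, ∃ c : ℝ≥0∞,
      (ψ j (x j) + ⨆ s ∈ I j, ((s * x j : ℝ) : EReal)) = (c : EReal) :=
    fun j => ereal_nonneg_rep _ (hφpos j (x j))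
  choose a ha using hrep
  have hgx : g x = ((∑' j, a j : ℝ≥0∞) : EReal) := by
    rw [hg, ← ereal_tsum_coe]
    exact tsum_congr fun j => ha j
  -- g 0 = 0
  have hg0 : g 0 = 0 := by
    rw [hg]
    have hz : ∀ j, ((0 : lp (fun _ : ℕ => ℝ) 2) j : ℝ) = 0 := fun j => rfl
    have : ∀ j, (ψ j ((0 : lp (fun _ : ℕ => ℝ) 2) j) +
        ⨆ s ∈ I j, ((s * ((0 : lp (fun _ : ℕ => ℝ) 2) j) : ℝ) : EReal)) = 0 := by
      intro j
      rw [hz j]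
      exact hφ0 j
    rw [tsum_congr this, tsum_zero]
  -- finiteness of the total sum
  have hfin : (∑' j, a j) ≠ ⊤ := by
    intro htop
    have h1 := hxs 0
    rw [hg0, hgx, htop] at h1
    rw [EReal.coe_ennreal_top, EReal.top_add_coe] at h1
    exact absurd h1 (by simp)
  -- key pointwise estimate
  have hkey : ∀ k, x k ≠ 0 → ω ≤ |x k + xs k| := by
    intro k hk
    set y : lp (fun _ : ℕ => ℝ) 2 := x + (-(x k)) • lp.single 2 k 1 with hy
    have hyk : y k = 0 := by
      rw [hy]
      rw [lp.coeFn_add, Pi.add_apply, lp.coeFn_smul, Pi.smul_apply, lp.single_apply_self]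
      simp
    have hyj : ∀ j, j ≠ k → y j = x j := by
      intro j hj
      rw [hy]
      rw [lp.coeFn_add, Pi.add_apply, lp.coeFn_smul, Pi.smul_apply, lp.single_apply_ne 2 k _ hj]
      simp
    have hinner : ⟪xs, y - x⟫ = -(x k) * xs k := by
      rw [hy]
      simp only [add_sub_cancel_left, inner_smul_right]
      rw [real_inner_comm, lp.inner_single_left]
      simp [RCLike.inner_apply]
    -- representation of g y
    set b : ℕ → ℝ≥0∞ := fun j => if j = k then 0 else a j with hb
    have hbterm : ∀ j, (ψ j (y j) + ⨆ s ∈ I j, ((s * y j : ℝ) : EReal)) = (b j : EReal) := by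
      intro j
      by_cases hj : j = k
      · subst hj
        rw [hyk, hφ0 j, hb]
        simp
      · rw [hyj j hj, hb]
        simp only [if_neg hj]
        exact ha j
    have hgy : g y = ((∑' j, b j : ℝ≥0∞) : EReal) := by
      rw [hg, ← ereal_tsum_coe]
      exact tsum_congr fun j => hbterm j
    have hsum : (∑' j, a j) = a k + ∑' j, b j := by
      rw [ENNReal.tsum_eq_add_tsum_ite k]
      congr 1
      apply tsum_congr
      intro j
      rw [hb]
      simp only []
      split_ifs <;> rfl
    have hak : a k ≠ ⊤ := ne_top_of_le_ne_top hfin (ENNReal.le_tsum k)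
    have hbfin : (∑' j, b j) ≠ ⊤ := by
      intro htop
      rw [hsum, htop, add_top] at hfin
      exact hfin rfl
    -- convert the subgradient inequality to reals
    have h1 := hxs y
    rw [hgx, hgy, hinner, ereal_coe_ennreal_fin _ hfin, ereal_coe_ennreal_fin _ hbfin,
      ← EReal.coe_add, EReal.coe_le_coe_iff] at h1
    have hAB : (∑' j, a j).toReal = (a k).toReal + (∑' j, b j).toReal := by
      rw [hsum, ENNReal.toReal_add hak hbfin]
    have hkx : (a k).toReal ≤ x k * xs k := by nlinarith [h1, hAB]
    -- lower bound for (a k).toReal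
    have hlow : ω * |x k| ≤ (a k).toReal := by
      set s₀ : ℝ := if 0 ≤ x k then ω else -ω with hs₀
      have hs₀I : s₀ ∈ I k := by
        rw [hs₀]
        split_ifs
        · exact hIsub k ⟨by linarith, le_refl ω⟩
        · exact hIsub k ⟨le_refl (-ω), by linarith⟩
      have hs₀v : s₀ * x k = ω * |x k| := by
        rw [hs₀]
        rcases le_or_gt 0 (x k) with hc | hc
        · rw [if_pos hc, abs_of_nonneg hc]
        · rw [if_neg (not_le.mpr hc), abs_of_neg hc]; ring
      have hle : ((ω * |x k| : ℝ) : EReal) ≤ (a k : EReal) := by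
        rw [← ha k, ← hs₀v]
        calc ((s₀ * x k : ℝ) : EReal)
            ≤ ⨆ s ∈ I k, ((s * x k : ℝ) : EReal) :=
              le_iSup₂ (f := fun (s : ℝ) (_ : s ∈ I k) => ((s * x k : ℝ) : EReal)) s₀ hs₀I
          _ ≤ ψ k (x k) + ⨆ s ∈ I k, ((s * x k : ℝ) : EReal) := by
              have := add_le_add (hψpos k (x k))
                (le_refl (⨆ s ∈ I k, ((s * x k : ℝ) : EReal)))
              simpa using this
      rw [ereal_coe_ennreal_fin _ hak, EReal.coe_le_coe_iff] at hle
      exact hle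
    have hmain : ω * |x k| ≤ x k * xs k := le_trans hlow hkx
    rcases hk.lt_or_gt with hc | hc
    · have habs : |x k| = -(x k) := abs_of_neg hc
      rw [habs] at hmain
      have hxs' : xs k ≤ -ω := by nlinarith
      have : x k + xs k ≤ -ω := by linarith
      calc ω ≤ -(x k + xs k) := by linarith
        _ ≤ |x k + xs k| := neg_le_abs _
    · have habs : |x k| = x k := abs_of_pos hc
      rw [habs] at hmain
      have hxs' : ω ≤ xs k := by nlinarith
      calc ω ≤ x k + xs k := by linarith
        _ ≤ |x k + xs k| := le_abs_self _
  -- from the key estimate to the conclusion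
  set z : lp (fun _ : ℕ => ℝ) 2 := x + xs with hz
  have hzk : ∀ k, z k = x k + xs k := by
    intro k
    rw [hz]
    simp [lp.coeFn_add]
  have hrpow : ∀ u : ℝ, 0 ≤ u → u ^ (2:ℝ) = u ^ 2 := by
    intro u hu
    rw [show (2:ℝ) = ((2:ℕ):ℝ) by norm_cast, Real.rpow_natCast]
  have hfinsum : ∀ s : Finset ℕ, (↑s ⊆ {k : ℕ | x k ≠ 0}) → (s.card : ℝ) * ω ^ 2 ≤ ‖z‖ ^ 2 := by
    intro s hs
    have h2 : ∑ i ∈ s, ‖z i‖ ^ (2:ℝ) ≤ ‖z‖ ^ (2:ℝ) := by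
      have := lp.sum_rpow_le_norm_rpow (p := 2) (by norm_num) z s
      simpa using this
    rw [hrpow _ (norm_nonneg z)] at h2
    have h3 : ∀ i ∈ s, ω ^ 2 ≤ ‖z i‖ ^ (2:ℝ) := by
      intro i hi
      rw [hrpow _ (norm_nonneg (z i))]
      have hki : x i ≠ 0 := hs hi
      have := hkey i hki
      rw [← hzk i] at this
      have habs : |z i| = ‖z i‖ := rfl
      rw [habs] at this
      nlinarith [norm_nonneg (z i)]
    calc (s.card : ℝ) * ω ^ 2 = ∑ _i ∈ s, ω ^ 2 := by
          rw [Finset.sum_const, nsmul_eq_mul]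
      _ ≤ ∑ i ∈ s, ‖z i‖ ^ (2:ℝ) := Finset.sum_le_sum h3
      _ ≤ ‖z‖ ^ 2 := h2
  have hfinS : {k : ℕ | x k ≠ 0}.Finite := by
    by_contra hinf
    have hinf : {k : ℕ | x k ≠ 0}.Infinite := hinf
    obtain ⟨s, hsub, hcard⟩ := hinf.exists_subset_card_eq (⌊‖z‖ ^ 2 / ω ^ 2⌋₊ + 1)
    have h1 := hfinsum s hsub
    rw [hcard] at h1
    have h2 : ‖z‖ ^ 2 / ω ^ 2 < (⌊‖z‖ ^ 2 / ω ^ 2⌋₊ + 1 : ℕ) := by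
      push_cast
      exact Nat.lt_floor_add_one _
    have hω2 : (0:ℝ) < ω ^ 2 := by positivity
    rw [div_lt_iff₀ hω2] at h2
    linarith
  refine ⟨hfinS, ?_⟩
  have hcard : {k : ℕ | x k ≠ 0}.ncard = hfinS.toFinset.card :=
    Set.ncard_eq_toFinset_card _ hfinS
  have h1 := hfinsum hfinS.toFinset (by simp)
  rw [hcard]
  have hω2 : (0:ℝ) < ω ^ 2 := by positivity
  rw [inv_pow, ← div_eq_inv_mul, le_div_iff₀ hω2]
  linarith
end

section
/- Under hypothesis (H) with ψ ≡ 0, if x̄ ∈ argmin f then esupp(x̄) = {k ∈ ℕ : −(∇h(x̄))_k ∈ bd I_k}; in particular esupp(x̄) does not depend on the choice of minimizer x̄, since ∇h is constant on argmin f. -/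
open scoped RealInnerProductSpace ENNReal NNReal Topology
open Filter

noncomputable section

namespace Stmt16

/-- coercion ℝ≥0∞ → EReal as an AddMonoidHom -/
def eCoeHom : ℝ≥0∞ →+ EReal :=
  ⟨⟨((↑) : ℝ≥0∞ → EReal), EReal.coe_ennreal_zero⟩, EReal.coe_ennreal_add⟩

lemma tsum_repr (g : ℕ → EReal) (hg : ∀ j, 0 ≤ g j) :
    ∃ a : ℕ → ℝ≥0∞, (∀ j, (a j : EReal) = g j) ∧
      ∑' j, g j = ((∑' j, a j : ℝ≥0∞) : EReal) := by
  have hrep : ∀ j, ∃ b : ℝ≥0∞, (b : EReal) = g j := fun j => by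
    have : g j ∈ Set.range ((↑) : ℝ≥0∞ → EReal) := by
      rw [EReal.range_coe_ennreal]; exact hg j
    exact this
  choose a ha using hrep
  refine ⟨a, ha, ?_⟩
  have h1 : HasSum (fun j => (a j : EReal)) ((∑' j, a j : ℝ≥0∞) : EReal) :=
    ENNReal.summable.hasSum.map eCoeHom continuous_coe_ennreal_ereal
  have h2 : HasSum g ((∑' j, a j : ℝ≥0∞) : EReal) := by
    have : g = fun j => (a j : EReal) := funext fun j => (ha j).symm
    rw [this]; exact h1
  exact h2.tsum_eq

lemma coe_ennreal_fin {a : ℝ≥0∞} (ha : a ≠ ⊤) : (a : EReal) = ((a.toReal : ℝ) : EReal) := by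
  conv_lhs => rw [← ENNReal.ofReal_toReal ha]
  rw [EReal.coe_ennreal_ofReal, max_eq_left ENNReal.toReal_nonneg]

/-- slope lower bound on the right gives derivative lower bound -/
lemma slope_le_deriv {φ : ℝ → ℝ} {d b : ℝ} (hd : HasDerivAt φ d 0)
    (hb : ∀ θ : ℝ, 0 < θ → θ < 1 → b * θ ≤ φ θ - φ 0) : b ≤ d := by
  have h1 : Filter.Tendsto (slope φ 0) (𝓝[>] 0) (𝓝 d) :=
    (hasDerivAt_iff_tendsto_slope.1 hd).mono_left
      (nhdsWithin_mono _ fun x hx => ne_of_gt hx)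
  refine ge_of_tendsto h1 ?_
  filter_upwards [Ioo_mem_nhdsGT_of_mem (by norm_num : (0:ℝ) ∈ Set.Ico 0 1)]
    with θ hθ
  rcases hθ with ⟨hθ0, hθ1⟩
  rw [slope_def_field, sub_zero, le_div_iff₀ hθ0]
  simpa [mul_comm] using hb θ hθ0 hθ1

/-- slope upper bound on the right gives derivative upper bound -/
lemma deriv_le_slope {φ : ℝ → ℝ} {d b : ℝ} (hd : HasDerivAt φ d 0)
    (hb : ∀ θ : ℝ, 0 < θ → θ < 1 → φ θ - φ 0 ≤ b * θ) : d ≤ b := by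
  have h1 : Filter.Tendsto (slope φ 0) (𝓝[>] 0) (𝓝 d) :=
    (hasDerivAt_iff_tendsto_slope.1 hd).mono_left
      (nhdsWithin_mono _ fun x hx => ne_of_gt hx)
  refine le_of_tendsto h1 ?_
  filter_upwards [Ioo_mem_nhdsGT_of_mem (by norm_num : (0:ℝ) ∈ Set.Ico 0 1)]
    with θ hθ
  rcases hθ with ⟨hθ0, hθ1⟩
  rw [slope_def_field, sub_zero, div_le_iff₀ hθ0]
  simpa [mul_comm] using hb θ hθ0 hθ1


variable {E : Type*} [NormedAddCommGroup E] [InnerProductSpace ℝ E] [CompleteSpace E]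

/-- derivative along a line, from a gradient -/
lemma hasDerivAt_line {h : E → ℝ} {g : E} {x : E} (hg : HasGradientAt h g x) (v : E) :
    HasDerivAt (fun θ : ℝ => h (x + θ • v)) ⟪g, v⟫ 0 := by
  have hline : HasDerivAt (fun θ : ℝ => x + θ • v) v 0 := by
    simpa using ((hasDerivAt_id (0:ℝ)).smul_const v).const_add x
  have hfd : HasFDerivAt h (InnerProductSpace.toDual ℝ E g) (x + (0:ℝ) • v) := by
    simpa using hg.hasFDerivAt
  have := hfd.comp_hasDerivAt 0 hline
  simpa [InnerProductSpace.toDual_apply_apply, Function.comp_def] using this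

/-- membership in the frontier from support-function attainment -/
lemma mem_frontier_of_sup {K : Set ℝ} {t c : ℝ} (ht : t ≠ 0)
    (hub : ∀ s ∈ K, s * t ≤ c * t)
    (happrox : ∀ ε : ℝ, 0 < ε → ∃ s ∈ K, c * t - ε < s * t) :
    c ∈ frontier K := by
  have hcl : c ∈ closure K := by
    rw [Metric.mem_closure_iff]
    intro ε hε
    obtain ⟨s, hsK, hs⟩ := happrox (ε * |t|) (by positivity)
    refine ⟨s, hsK, ?_⟩
    rw [Real.dist_eq, abs_lt]
    rcases lt_or_gt_of_ne ht with htneg | htpos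
    · have h1 : c ≤ s := by
        have := hub s hsK; nlinarith [abs_of_neg htneg]
      have h2 : s - c < ε := by nlinarith [abs_of_neg htneg]
      constructor <;> linarith
    · have h1 : s ≤ c := by
        have := hub s hsK; nlinarith [abs_of_pos htpos]
      have h2 : c - s < ε := by nlinarith [abs_of_pos htpos]
      constructor <;> linarith
  have hint : c ∉ interior K := by
    intro hc
    obtain ⟨ε, hε, hball⟩ := Metric.isOpen_iff.1 isOpen_interior c hc
    rcases lt_or_gt_of_ne ht with htneg | htpos
    · have hmem : c - ε / 2 ∈ K := by
        refine interior_subset (hball ?_)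
        rw [Metric.mem_ball, Real.dist_eq, show c - ε / 2 - c = -(ε/2) by ring,
          abs_neg, abs_of_pos (by linarith)]
        linarith
      have := hub _ hmem; nlinarith
    · have hmem : c + ε / 2 ∈ K := by
        refine interior_subset (hball ?_)
        rw [Metric.mem_ball, Real.dist_eq, show c + ε / 2 - c = ε/2 by ring,
          abs_of_pos (by linarith)]
        linarith
      have := hub _ hmem; nlinarith
  rw [frontier]; exact ⟨hcl, hint⟩


/-- the support function as an `EReal`-valued biSup -/
def sig (K : Set ℝ) (u : ℝ) : EReal := ⨆ s ∈ K, ((s * u : ℝ) : EReal)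

lemma le_sig {K : Set ℝ} {s : ℝ} (hs : s ∈ K) (u : ℝ) :
    ((s * u : ℝ) : EReal) ≤ sig K u :=
  le_biSup (fun s => ((s * u : ℝ) : EReal)) hs

lemma sig_nonneg {K : Set ℝ} (h0 : (0:ℝ) ∈ K) (u : ℝ) : 0 ≤ sig K u := by
  have := le_sig h0 u
  simpa using this

lemma sig_zero {K : Set ℝ} (h0 : (0:ℝ) ∈ K) : sig K 0 = 0 := by
  refine le_antisymm ?_ (sig_nonneg h0 0)
  refine iSup₂_le fun s _ => by simp

lemma lt_sig_of_lt {K : Set ℝ} {u : ℝ} {x : EReal} (hx : x < sig K u) :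
    ∃ s ∈ K, x < ((s * u : ℝ) : EReal) := by
  by_contra hcon
  push_neg at hcon
  exact absurd hx (not_lt.2 (iSup₂_le fun s hs => hcon s hs))

lemma sig_smul {K : Set ℝ} {t M lam : ℝ} (hlam : 0 < lam) (h0 : (0:ℝ) ∈ K)
    (hM : sig K t = ((M : ℝ) : EReal)) :
    sig K (lam * t) = ((lam * M : ℝ) : EReal) := by
  refine le_antisymm (iSup₂_le fun s hs => ?_) (le_of_forall_lt fun x hx => ?_)
  · have h1 : ((s * t : ℝ) : EReal) ≤ ((M:ℝ) : EReal) := hM ▸ le_sig hs t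
    have h2 : s * t ≤ M := EReal.coe_le_coe_iff.1 h1
    have : s * (lam * t) ≤ lam * M := by nlinarith
    exact_mod_cast EReal.coe_le_coe_iff.2 this
  · induction x with
    | bot => exact lt_of_lt_of_le (by simp) (sig_nonneg h0 _)
    | coe r =>
      have hr : r < lam * M := EReal.coe_lt_coe_iff.1 hx
      have hrM : r / lam < M := (div_lt_iff₀ hlam).2 (by linarith [mul_comm lam M])
      have : ((r / lam : ℝ) : EReal) < sig K t := by
        rw [hM]; exact_mod_cast EReal.coe_lt_coe_iff.2 hrM
      obtain ⟨s, hsK, hs⟩ := lt_sig_of_lt this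
      have hs' : r / lam < s * t := EReal.coe_lt_coe_iff.1 hs
      have : r < s * (lam * t) := by
        have := (div_lt_iff₀ hlam).1 hs'
        nlinarith
      calc ((r:ℝ) : EReal) < ((s * (lam * t) : ℝ) : EReal) := EReal.coe_lt_coe_iff.2 this
        _ ≤ sig K (lam * t) := le_sig hsK _
    | top => exact absurd hx (by simp)


abbrev ℓ2 := lp (fun _ : ℕ => ℝ) 2

lemma main1 {ω : ℝ} (hω : 0 < ω) (I : ℕ → Set ℝ) (hIsub : ∀ k, Set.Icc (-ω) ω ⊆ I k)
    (h : ℓ2 → ℝ) (h' : ℓ2 → ℓ2)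
    (hhgrad : ∀ x, HasGradientAt h (h' x) x)
    (f : ℓ2 → EReal)
    (hf : ∀ x, f x = (∑' j, ⨆ s ∈ I j, ((s * x j : ℝ) : EReal)) + ((h x : ℝ) : EReal))
    (xbar : ℓ2) (hmin : ∀ y, f xbar ≤ f y)
    (k : ℕ) (hk : xbar k ≠ 0) : -(h' xbar k) ∈ frontier (I k) := by
  classical
  have h0K : ∀ j, (0:ℝ) ∈ I j := fun j => hIsub j ⟨by linarith, hω.le⟩
  set t : ℝ := xbar k with ht
  have hfs : ∀ x : ℓ2, f x = (∑' j, sig (I j) (x j)) + ((h x : ℝ) : EReal) := hf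
  obtain ⟨a, ha, hsum⟩ := tsum_repr (fun j => sig (I j) (xbar j))
    (fun j => sig_nonneg (h0K j) _)
  have hf0 : f 0 = ((h 0 : ℝ) : EReal) := by
    rw [hfs 0]
    have hz : ∀ j, sig (I j) ((0 : ℓ2) j) = 0 := by
      intro j
      have h0 : ((0 : ℓ2) j : ℝ) = 0 := by rw [lp.coeFn_zero]; rfl
      rw [h0, sig_zero (h0K j)]
    rw [tsum_congr hz, tsum_zero, zero_add]
  have hfin : (∑' j, a j) ≠ ⊤ := by
    intro htop
    have h1 := hmin 0
    rw [hf0, hfs xbar, hsum, htop, EReal.coe_ennreal_top, EReal.top_add_coe] at h1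
    exact (EReal.coe_lt_top (h 0)).not_ge h1
  have hak : a k ≠ ⊤ := ENNReal.ne_top_of_tsum_ne_top hfin k
  set M : ℝ := (a k).toReal with hM
  have hgk : sig (I k) t = ((M : ℝ) : EReal) := by
    rw [← ha k, coe_ennreal_fin hak]
  set R : ℝ≥0∞ := ∑' j, (if j = k then 0 else a j) with hRdef
  have hsplit : ∑' j, a j = a k + R := by
    rw [hRdef, ENNReal.tsum_eq_add_tsum_ite k]
    congr 1
    exact tsum_congr fun j => by split_ifs <;> rfl
  have hRfin : R ≠ ⊤ := by
    intro htop; rw [hsplit, htop, add_top] at hfin; exact hfin rfl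
  set r : ℝ := R.toReal with hr
  have key : ∀ (τ V : ℝ), sig (I k) (t + τ) = ((V:ℝ):EReal) →
      M + h xbar ≤ V + h (xbar + τ • lp.single 2 k (1:ℝ)) := by
    intro τ V hV
    set y := xbar + τ • lp.single 2 k (1:ℝ) with hy
    have hyk : (y k : ℝ) = t + τ := by
      rw [hy, lp.coeFn_add, lp.coeFn_smul]
      simp [lp.single_apply_self, ht]
    have hyj : ∀ j, j ≠ k → (y j : ℝ) = xbar j := by
      intro j hj
      rw [hy, lp.coeFn_add, lp.coeFn_smul]
      simp [lp.single_apply_ne _ _ _ hj, Pi.single_apply, hj]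
    obtain ⟨b, hb, hsumb⟩ := tsum_repr (fun j => sig (I j) (y j))
      (fun j => sig_nonneg (h0K j) _)
    have hbj : ∀ j, j ≠ k → b j = a j := by
      intro j hj
      apply EReal.coe_ennreal_strictMono.injective
      rw [hb j, ha j, hyj j hj]
    have hbk : (b k : EReal) = ((V:ℝ):EReal) := by
      rw [hb k, hyk]; exact hV
    have hbkfin : b k ≠ ⊤ := by
      intro htop
      rw [htop, EReal.coe_ennreal_top] at hbk
      exact (EReal.coe_lt_top V).ne' hbk
    have hbkV : ((b k).toReal : ℝ) = V := by
      have h2 := hbk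
      rw [coe_ennreal_fin hbkfin] at h2
      exact_mod_cast h2
    have hsplitb : ∑' j, b j = b k + R := by
      rw [ENNReal.tsum_eq_add_tsum_ite k, hRdef]
      congr 1
      refine tsum_congr fun j => ?_
      by_cases hj : j = k
      · simp [hj]
      · simp only [if_neg hj, hbj j hj]
    have h1 := hmin y
    rw [hfs xbar, hfs y, hsum, hsumb, hsplit, hsplitb,
      EReal.coe_ennreal_add, EReal.coe_ennreal_add,
      coe_ennreal_fin hak, coe_ennreal_fin hRfin, coe_ennreal_fin hbkfin] at h1
    rw [hbkV, ← hM, ← hr] at h1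
    have h2 : ((M + r + h xbar : ℝ) : EReal) ≤ ((V + r + h y : ℝ) : EReal) := by
      push_cast
      convert h1 using 1 <;> ring_nf
    have h3 : M + r + h xbar ≤ V + r + h y := EReal.coe_le_coe_iff.1 h2
    linarith
  -- derivative setup
  set v : ℓ2 := t • lp.single 2 k (1:ℝ) with hv
  have hyθ : ∀ θ : ℝ, xbar + θ • v = xbar + (θ * t) • lp.single 2 k (1:ℝ) := by
    intro θ; rw [hv, smul_smul]
  set d : ℝ := t * (h' xbar k) with hd
  have hdv : HasDerivAt (fun θ : ℝ => h (xbar + θ • v)) d 0 := by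
    have h1 := hasDerivAt_line (hhgrad xbar) v
    have h2 : ⟪h' xbar, v⟫ = d := by
      rw [hv, real_inner_smul_right, lp.inner_single_right]
      simp [hd]
    rwa [h2] at h1
  have hφ0 : h (xbar + (0:ℝ) • v) = h xbar := by simp
  have hA : -M ≤ d := by
    refine slope_le_deriv hdv ?_
    intro θ hθ0 hθ1
    have hsig : sig (I k) (t + θ * t) = (((1+θ) * M : ℝ) : EReal) := by
      rw [show t + θ * t = (1+θ) * t by ring]
      exact sig_smul (by linarith) (h0K k) hgk
    have h1 := key (θ * t) ((1+θ) * M) hsig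
    rw [← hyθ θ] at h1
    rw [hφ0]
    nlinarith
  have hB : M ≤ -d := by
    have hneg : HasDerivAt (fun θ : ℝ => h (xbar + (-θ) • v)) (-d) 0 := by
      have h0 : HasDerivAt (fun θ : ℝ => h (xbar + θ • v)) d (-(0:ℝ)) := by
        rw [neg_zero]; exact hdv
      have h1 := h0.comp (0:ℝ) (hasDerivAt_neg (0:ℝ))
      simp only [neg_zero, Function.comp_def] at h1
      rw [show -d = d * -1 by ring]
      exact h1
    refine slope_le_deriv hneg ?_
    intro θ hθ0 hθ1
    have hsig : sig (I k) (t + (-θ) * t) = (((1-θ) * M : ℝ) : EReal) := by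
      rw [show t + (-θ) * t = (1-θ) * t by ring]
      exact sig_smul (by linarith) (h0K k) hgk
    have h1 := key ((-θ) * t) ((1-θ) * M) hsig
    rw [← hyθ (-θ)] at h1
    simp only [neg_zero, hφ0]
    nlinarith
  have hMd : M = -d := le_antisymm (by linarith) (by linarith)
  -- conclude
  set c : ℝ := -(h' xbar k) with hc
  have hsigc : sig (I k) t = ((c * t : ℝ) : EReal) := by
    rw [hgk]
    congr 1
    rw [hMd, hd, hc]; ring
  refine mem_frontier_of_sup hk ?_ ?_
  · intro s hs
    have h1 : ((s * t : ℝ) : EReal) ≤ ((c * t : ℝ) : EReal) := hsigc ▸ le_sig hs t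
    exact EReal.coe_le_coe_iff.1 h1
  · intro ε hε
    have h1 : ((c * t - ε : ℝ) : EReal) < sig (I k) t := by
      rw [hsigc]
      exact_mod_cast EReal.coe_lt_coe_iff.2 (by linarith)
    obtain ⟨s, hsK, hs⟩ := lt_sig_of_lt h1
    exact ⟨s, hsK, EReal.coe_lt_coe_iff.1 hs⟩


/-- first-order condition for convex functions -/
lemma conv_slope {h : E → ℝ} (hconv : ConvexOn ℝ Set.univ h) {g x : E}
    (hg : HasGradientAt h g x) (u : E) : ⟪g, u - x⟫ ≤ h u - h x := by
  have hcomb : ∀ θ : ℝ, x + θ • (u - x) = (1 - θ) • x + θ • u := by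
    intro θ
    rw [smul_sub, sub_smul, one_smul]
    abel
  refine deriv_le_slope (hasDerivAt_line hg (u - x)) ?_
  intro θ hθ0 hθ1
  have hb := hconv.2 (Set.mem_univ x) (Set.mem_univ u)
    (by linarith : (0:ℝ) ≤ 1 - θ) hθ0.le (by ring)
  rw [hcomb θ]
  have h0 : (0:ℝ) • (u - x) = 0 := zero_smul ℝ _
  have hx0 : h (x + (0:ℝ) • (u - x)) = h x := by rw [h0, add_zero]
  rw [hx0] at *
  have : h ((1-θ) • x + θ • u) ≤ (1-θ) * h x + θ * h u := by simpa [smul_eq_mul] using hb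
  nlinarith

lemma repr_min {ω : ℝ} (hω : 0 < ω) {I : ℕ → Set ℝ} (hIsub : ∀ k, Set.Icc (-ω) ω ⊆ I k)
    {h : ℓ2 → ℝ} {f : ℓ2 → EReal}
    (hf : ∀ x, f x = (∑' j, ⨆ s ∈ I j, ((s * x j : ℝ) : EReal)) + ((h x : ℝ) : EReal))
    (x : ℓ2) (hmin : ∀ y, f x ≤ f y) :
    ∃ a : ℕ → ℝ≥0∞, (∀ j, (a j : EReal) = sig (I j) (x j)) ∧
      (∑' j, sig (I j) (x j)) = ((∑' j, a j : ℝ≥0∞) : EReal) ∧ (∑' j, a j) ≠ ⊤ := by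
  have h0K : ∀ j, (0:ℝ) ∈ I j := fun j => hIsub j ⟨by linarith, hω.le⟩
  have hfs : ∀ z : ℓ2, f z = (∑' j, sig (I j) (z j)) + ((h z : ℝ) : EReal) := hf
  obtain ⟨a, ha, hsum⟩ := tsum_repr (fun j => sig (I j) (x j))
    (fun j => sig_nonneg (h0K j) _)
  have hf0 : f 0 = ((h 0 : ℝ) : EReal) := by
    rw [hfs 0]
    have hz : ∀ j, sig (I j) ((0 : ℓ2) j) = 0 := by
      intro j
      have h0 : ((0 : ℓ2) j : ℝ) = 0 := by rw [lp.coeFn_zero]; rfl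
      rw [h0, sig_zero (h0K j)]
    rw [tsum_congr hz, tsum_zero, zero_add]
  refine ⟨a, ha, hsum, ?_⟩
  intro htop
  have h1 := hmin 0
  rw [hf0, hfs x, hsum, htop, EReal.coe_ennreal_top, EReal.top_add_coe] at h1
  exact (EReal.coe_lt_top (h 0)).not_ge h1

lemma main2 {ω : ℝ} (hω : 0 < ω) (I : ℕ → Set ℝ) (hIsub : ∀ k, Set.Icc (-ω) ω ⊆ I k)
    (h : ℓ2 → ℝ) (h' : ℓ2 → ℓ2)
    (hhconv : ConvexOn ℝ Set.univ h)
    (hhgrad : ∀ x, HasGradientAt h (h' x) x)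
    (f : ℓ2 → EReal)
    (hf : ∀ x, f x = (∑' j, ⨆ s ∈ I j, ((s * x j : ℝ) : EReal)) + ((h x : ℝ) : EReal))
    (x x' : ℓ2) (hminx : ∀ y, f x ≤ f y) (hminx' : ∀ y, f x' ≤ f y) :
    h' x = h' x' := by
  classical
  have h0K : ∀ j, (0:ℝ) ∈ I j := fun j => hIsub j ⟨by linarith, hω.le⟩
  have hfs : ∀ z : ℓ2, f z = (∑' j, sig (I j) (z j)) + ((h z : ℝ) : EReal) := hf
  obtain ⟨a, ha, hsum, hfin⟩ := repr_min hω hIsub hf x hminx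
  obtain ⟨a', ha', hsum', hfin'⟩ := repr_min hω hIsub hf x' hminx'
  set S : ℝ := (∑' j, a j).toReal with hS
  set S' : ℝ := (∑' j, a' j).toReal with hS'
  have hfx : f x = ((S + h x : ℝ) : EReal) := by
    rw [hfs x, hsum, coe_ennreal_fin hfin, ← hS, ← EReal.coe_add]
  have hfx' : f x' = ((S' + h x' : ℝ) : EReal) := by
    rw [hfs x', hsum', coe_ennreal_fin hfin', ← hS', ← EReal.coe_add]
  have heq : S + h x = S' + h x' := by
    have h1 := le_antisymm (hminx x') (hminx' x)
    rw [hfx, hfx'] at h1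
    exact_mod_cast h1
  -- the segment
  have hmj : ∀ j, ∀ s0 ∈ I j, s0 * (x j) ≤ (a j).toReal := by
    intro j s0 hs0
    have h1 : ((s0 * x j : ℝ) : EReal) ≤ sig (I j) (x j) := le_sig hs0 _
    rw [← ha j, coe_ennreal_fin (ENNReal.ne_top_of_tsum_ne_top hfin j)] at h1
    exact_mod_cast h1
  have hmj' : ∀ j, ∀ s0 ∈ I j, s0 * (x' j) ≤ (a' j).toReal := by
    intro j s0 hs0
    have h1 : ((s0 * x' j : ℝ) : EReal) ≤ sig (I j) (x' j) := le_sig hs0 _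
    rw [← ha' j, coe_ennreal_fin (ENNReal.ne_top_of_tsum_ne_top hfin' j)] at h1
    exact_mod_cast h1
  have hseg : ∀ s : ℝ, 0 < s → s < 1 →
      h (x + s • (x' - x)) - h x = s * (h x' - h x) := by
    intro s hs0 hs1
    set z : ℓ2 := x + s • (x' - x) with hz
    have hzj : ∀ j, (z j : ℝ) = (1 - s) * (x j) + s * (x' j) := by
      intro j
      rw [hz, lp.coeFn_add, lp.coeFn_smul, lp.coeFn_sub]
      simp only [Pi.add_apply, Pi.smul_apply, Pi.sub_apply, smul_eq_mul]
      ring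
    obtain ⟨b, hb, hsumb⟩ := tsum_repr (fun j => sig (I j) (z j))
      (fun j => sig_nonneg (h0K j) _)
    have hbound : ∀ j, b j ≤ ENNReal.ofReal ((1-s) * (a j).toReal + s * (a' j).toReal) := by
      intro j
      have hnn : 0 ≤ (1-s) * (a j).toReal + s * (a' j).toReal := by
        have := ENNReal.toReal_nonneg (a := a j)
        have := ENNReal.toReal_nonneg (a := a' j)
        nlinarith
      rw [← EReal.coe_ennreal_le_coe_ennreal_iff, hb j, EReal.coe_ennreal_ofReal,
        max_eq_left hnn]
      refine iSup₂_le fun s0 hs0' => ?_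
      have h1 := hmj j s0 hs0'
      have h2 := hmj' j s0 hs0'
      have : s0 * (z j) ≤ (1-s) * (a j).toReal + s * (a' j).toReal := by
        rw [hzj j]; nlinarith
      exact_mod_cast EReal.coe_le_coe_iff.2 this
    have hsum_le : (∑' j, b j) ≤
        ENNReal.ofReal (1-s) * (∑' j, a j) + ENNReal.ofReal s * (∑' j, a' j) := by
      calc (∑' j, b j)
          ≤ ∑' j, (ENNReal.ofReal ((1-s) * (a j).toReal) + ENNReal.ofReal (s * (a' j).toReal)) := by
            refine ENNReal.tsum_le_tsum fun j => ?_
            refine le_trans (hbound j) ?_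
            rw [ENNReal.ofReal_add (mul_nonneg (by linarith) ENNReal.toReal_nonneg)
              (mul_nonneg hs0.le ENNReal.toReal_nonneg)]
        _ = (∑' j, ENNReal.ofReal ((1-s) * (a j).toReal)) +
            (∑' j, ENNReal.ofReal (s * (a' j).toReal)) :=
            Summable.tsum_add ENNReal.summable ENNReal.summable
        _ = ENNReal.ofReal (1-s) * (∑' j, a j) + ENNReal.ofReal s * (∑' j, a' j) := by
            congr 1
            · rw [← ENNReal.tsum_mul_left]
              refine tsum_congr fun j => ?_
              rw [ENNReal.ofReal_mul (by linarith), ENNReal.ofReal_toReal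
                (ENNReal.ne_top_of_tsum_ne_top hfin j)]
            · rw [← ENNReal.tsum_mul_left]
              refine tsum_congr fun j => ?_
              rw [ENNReal.ofReal_mul hs0.le, ENNReal.ofReal_toReal
                (ENNReal.ne_top_of_tsum_ne_top hfin' j)]
    have hrhs_fin : ENNReal.ofReal (1-s) * (∑' j, a j) + ENNReal.ofReal s * (∑' j, a' j) ≠ ⊤ :=
      ENNReal.add_ne_top.2 ⟨ENNReal.mul_ne_top ENNReal.ofReal_ne_top hfin,
        ENNReal.mul_ne_top ENNReal.ofReal_ne_top hfin'⟩
    have hbfin : (∑' j, b j) ≠ ⊤ := ne_top_of_le_ne_top hrhs_fin hsum_le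
    have hSb : (∑' j, b j).toReal ≤ (1-s) * S + s * S' := by
      have h1 := ENNReal.toReal_mono hrhs_fin hsum_le
      rwa [ENNReal.toReal_add (ENNReal.mul_ne_top ENNReal.ofReal_ne_top hfin)
        (ENNReal.mul_ne_top ENNReal.ofReal_ne_top hfin'), ENNReal.toReal_mul,
        ENNReal.toReal_mul, ENNReal.toReal_ofReal (by linarith),
        ENNReal.toReal_ofReal hs0.le, ← hS, ← hS'] at h1
    have hmin1 := hminx z
    rw [hfx, hfs z, hsumb, coe_ennreal_fin hbfin, ← EReal.coe_add] at hmin1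
    have h2 : S + h x ≤ (∑' j, b j).toReal + h z := by exact_mod_cast hmin1
    -- convexity upper bound
    have hcomb : z = (1 - s) • x + s • x' := by
      rw [hz, smul_sub, sub_smul, one_smul]
      abel
    have h3 : h z ≤ (1-s) * h x + s * h x' := by
      have := hhconv.2 (Set.mem_univ x) (Set.mem_univ x')
        (by linarith : (0:ℝ) ≤ 1 - s) hs0.le (by ring)
      rw [← hcomb] at this
      simpa [smul_eq_mul] using this
    have h4 : h x + s * (h x' - h x) ≤ h z := by nlinarith
    have h5 : h z ≤ h x + s * (h x' - h x) := by nlinarith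
    rw [hz] at *
    linarith
  -- derivative along the segment
  have hD : ⟪h' x, x' - x⟫ = h x' - h x := by
    have hder := hasDerivAt_line (hhgrad x) (x' - x)
    have hφ0 : h (x + (0:ℝ) • (x' - x)) = h x := by simp
    refine le_antisymm (deriv_le_slope hder ?_) (slope_le_deriv hder ?_) <;>
    · intro θ hθ0 hθ1
      rw [hφ0, hseg θ hθ0 hθ1]
      ring_nf
      try exact le_refl _
  -- ψ phase
  set w : ℓ2 := h' x with hw
  have hpsimin : ∀ u : ℓ2, h x - ⟪w, x⟫ ≤ h u - ⟪w, u⟫ := by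
    intro u
    have h1 := conv_slope hhconv (hhgrad x) u
    rw [inner_sub_right] at h1
    linarith
  have hpsix' : h x' - ⟪w, x'⟫ = h x - ⟪w, x⟫ := by
    have h1 : ⟪w, x' - x⟫ = h x' - h x := hD
    rw [inner_sub_right] at h1
    linarith
  set v : ℓ2 := h' x' - w with hv
  have hderv : HasDerivAt (fun s : ℝ => h (x' + s • v) - (⟪w, x'⟫ + s * ⟪w, v⟫))
      (⟪h' x', v⟫ - ⟪w, v⟫) 0 := by
    have h1 := hasDerivAt_line (hhgrad x') v
    have h2 : HasDerivAt (fun s : ℝ => ⟪w, x'⟫ + s * ⟪w, v⟫) ⟪w, v⟫ 0 := by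
      simpa using ((hasDerivAt_id (0:ℝ)).mul_const ⟪w, v⟫).const_add ⟪w, x'⟫
    exact h1.sub h2
  have hlocmin : IsLocalMin (fun s : ℝ => h (x' + s • v) - (⟪w, x'⟫ + s * ⟪w, v⟫)) 0 := by
    refine Filter.Eventually.of_forall fun s => ?_
    have h1 := hpsimin (x' + s • v)
    have h2 : ⟪w, x' + s • v⟫ = ⟪w, x'⟫ + s * ⟪w, v⟫ := by
      rw [inner_add_right, real_inner_smul_right]
    simp only [zero_smul, add_zero, zero_mul]
    rw [← h2]
    linarith [hpsix' ▸ h1]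
  have hzero : ⟪h' x', v⟫ - ⟪w, v⟫ = 0 := hlocmin.hasDerivAt_eq_zero hderv
  have hvv : ⟪v, v⟫ = 0 := by
    rw [hv, inner_sub_left] at *
    linarith [hzero]
  have : v = 0 := inner_self_eq_zero.1 hvv
  have : h' x' - w = 0 := by rw [← hv]; exact this
  rw [hw] at this
  rw [eq_comm, ← sub_eq_zero]
  exact this

end Stmt16

end


/-- Hypothesis (H) with `ψ ≡ 0`: `f(x) = Σ_k σ_{I_k}(x_k) + h(x)` on `ℓ²(ℕ)`, with `h`
convex, bounded below, differentiable with `L`-Lipschitz gradient `h'`, and each `I_k` a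
proper closed interval containing `[−ω, ω]`, `ω > 0`.  If `x̄ ∈ argmin f` then
`esupp(x̄) = supp(x̄) ∪ {k : −(∇h(x̄))_k ∈ bd I_k} = {k : −(∇h(x̄))_k ∈ bd I_k}`;
in particular `esupp` does not depend on the choice of the minimizer. -/
theorem stmt_16 (ω L : ℝ) (hω : 0 < ω) (hL : 0 < L)
    (I : ℕ → Set ℝ) (hIcl : ∀ k, IsClosed (I k)) (hIconn : ∀ k, (I k).OrdConnected)
    (hIproper : ∀ k, I k ≠ Set.univ) (hIsub : ∀ k, Set.Icc (-ω) ω ⊆ I k)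
    (h : lp (fun _ : ℕ => ℝ) 2 → ℝ) (h' : lp (fun _ : ℕ => ℝ) 2 → lp (fun _ : ℕ => ℝ) 2)
    (hhconv : ConvexOn ℝ Set.univ h) (hhbdd : BddBelow (Set.range h))
    (hhgrad : ∀ x, HasGradientAt h (h' x) x)
    (hhlip : LipschitzWith (Real.toNNReal L) h')
    (f : lp (fun _ : ℕ => ℝ) 2 → EReal)
    (hf : ∀ x, f x = (∑' k, ⨆ s ∈ I k, ((s * x k : ℝ) : EReal)) + ((h x : ℝ) : EReal)) :
    (∀ xbar : lp (fun _ : ℕ => ℝ) 2, (∀ y, f xbar ≤ f y) →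
      {k : ℕ | xbar k ≠ 0} ∪ {k : ℕ | -(h' xbar k) ∈ frontier (I k)}
        = {k : ℕ | -(h' xbar k) ∈ frontier (I k)})
    ∧ (∀ xbar xbar' : lp (fun _ : ℕ => ℝ) 2, (∀ y, f xbar ≤ f y) → (∀ y, f xbar' ≤ f y) →
      {k : ℕ | xbar k ≠ 0} ∪ {k : ℕ | -(h' xbar k) ∈ frontier (I k)}
        = {k : ℕ | xbar' k ≠ 0} ∪ {k : ℕ | -(h' xbar' k) ∈ frontier (I k)}) := by
  have P1 : ∀ xbar : lp (fun _ : ℕ => ℝ) 2, (∀ y, f xbar ≤ f y) →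
      {k : ℕ | xbar k ≠ 0} ∪ {k : ℕ | -(h' xbar k) ∈ frontier (I k)}
        = {k : ℕ | -(h' xbar k) ∈ frontier (I k)} := by
    intro xbar hmin
    refine Set.union_eq_self_of_subset_left ?_
    intro k hk
    exact Stmt16.main1 hω I hIsub h h' hhgrad f hf xbar hmin k hk
  refine ⟨P1, ?_⟩
  intro xbar xbar' hmin hmin'
  have e : h' xbar = h' xbar' :=
    Stmt16.main2 hω I hIsub h h' hhconv hhgrad f hf xbar xbar' hmin hmin'
  rw [P1 xbar hmin, P1 xbar' hmin', e]
end
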